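/- Interpolation (inductive statement): Let Γ = Γ_s ⋈ Γ_t be a partitioned context. (1) For every normal form t with Γ ⊢ t ⇐ T, there exist a type M and terms l ∈ Tm(Γ_s, M) and r ∈ Tm(Γ_t.(x : M), T) such that Γ ⊢ r[l..] ≡ t : T and for every polarity p ∈ {+,−}, M^p ⊆ Γ_s^p ∩ (Γ_t^{−p} ∪ T^p). (2) For every neutral t with Γ ⊢ t ⇒ T, either (a) T^p ⊆ Γ_s^p for all p, and there exist a type M and terms l ∈ Tm(Γ_t, M) and r ∈ Tm(Γ_s.(x : M), T) with Γ ⊢ r[l..] ≡ t : T and M^p ⊆ Γ_s^{−p} ∩ Γ_t^p for all p; or (b) T^p ⊆ Γ_t^p for all p, and there exist a type M and terms l ∈ Tm(Γ_s, M) and r ∈ Tm(Γ_t.(x : M), T) with Γ ⊢ r[l..] ≡ t : T and M^p ⊆ Γ_s^p ∩ Γ_t^{−p} for all p. -/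

import Mathlib

namespace STLCp

/-- Types of the simply-typed λ-calculus with sums, over base types `B`. -/
inductive Ty (B : Type) : Type
  | base : B → Ty B
  | unit : Ty B
  | empty : Ty B
  | prod : Ty B → Ty B → Ty B
  | sum : Ty B → Ty B → Ty B
  | arr : Ty B → Ty B → Ty B

/-- Terms (de Bruijn style) over a set of constants `C`. -/
inductive Tm (C : Type) : Type
  | cst : C → Tm C
  | var : Nat → Tm C
  | star : Tm C
  | pair : Tm C → Tm C → Tm C
  | proj1 : Tm C → Tm C
  | proj2 : Tm C → Tm C
  | lam : Tm C → Tm C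
  | app : Tm C → Tm C → Tm C
  | inl : Tm C → Tm C
  | inr : Tm C → Tm C
  | raise : Tm C → Tm C
  | case : Tm C → Tm C → Tm C → Tm C

variable {B C : Type}

/-- Lifting a renaming under a binder. -/
def liftRen (ρ : Nat → Nat) : Nat → Nat
  | 0 => 0
  | n + 1 => ρ n + 1

/-- Action of renamings on terms. -/
def rename (ρ : Nat → Nat) : Tm C → Tm C
  | .cst c => .cst c
  | .var n => .var (ρ n)
  | .star => .star
  | .pair t u => .pair (rename ρ t) (rename ρ u)
  | .proj1 t => .proj1 (rename ρ t)
  | .proj2 t => .proj2 (rename ρ t)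
  | .lam t => .lam (rename (liftRen ρ) t)
  | .app t u => .app (rename ρ t) (rename ρ u)
  | .inl t => .inl (rename ρ t)
  | .inr t => .inr (rename ρ t)
  | .raise t => .raise (rename ρ t)
  | .case s bl br => .case (rename ρ s) (rename (liftRen ρ) bl) (rename (liftRen ρ) br)

/-- Lifting a parallel substitution under a binder. -/
def liftSub (σ : Nat → Tm C) : Nat → Tm C
  | 0 => .var 0
  | n + 1 => rename Nat.succ (σ n)

/-- Action of parallel substitutions on terms, `t[σ]`. -/
def subst (σ : Nat → Tm C) : Tm C → Tm C
  | .cst c => .cst c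
  | .var n => σ n
  | .star => .star
  | .pair t u => .pair (subst σ t) (subst σ u)
  | .proj1 t => .proj1 (subst σ t)
  | .proj2 t => .proj2 (subst σ t)
  | .lam t => .lam (subst (liftSub σ) t)
  | .app t u => .app (subst σ t) (subst σ u)
  | .inl t => .inl (subst σ t)
  | .inr t => .inr (subst σ t)
  | .raise t => .raise (subst σ t)
  | .case s bl br => .case (subst σ s) (subst (liftSub σ) bl) (subst (liftSub σ) br)

/-- The substitution `u..`: maps the last variable to `u`, the identity elsewhere. -/
def sub0 (u : Tm C) : Nat → Tm C
  | 0 => u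
  | n + 1 => .var n

/-- Eliminations: application, projections and case analysis. -/
inductive Elim (C : Type) : Type
  | eapp : Tm C → Elim C
  | eproj1 : Elim C
  | eproj2 : Elim C
  | ecase : Tm C → Tm C → Elim C

/-- Plugging a term into an elimination, `e[t]`. -/
def plug : Elim C → Tm C → Tm C
  | .eapp u, t => .app t u
  | .eproj1, t => .proj1 t
  | .eproj2, t => .proj2 t
  | .ecase bl br, t => .case t bl br

/-- Weakening the contents of an elimination (used when pushing it under a binder). -/
def weakenElim : Elim C → Elim C
  | .eapp u => .eapp (rename Nat.succ u)
  | .eproj1 => .eproj1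
  | .eproj2 => .eproj2
  | .ecase bl br => .ecase (rename (liftRen Nat.succ) bl) (rename (liftRen Nat.succ) br)

/-- The β-rules. -/
inductive BetaBase : Tm C → Tm C → Prop
  | proj1 (t u : Tm C) : BetaBase (.proj1 (.pair t u)) t
  | proj2 (t u : Tm C) : BetaBase (.proj2 (.pair t u)) u
  | app (t u : Tm C) : BetaBase (.app (.lam t) u) (subst (sub0 u) t)
  | case_inl (a bl br : Tm C) : BetaBase (.case (.inl a) bl br) (subst (sub0 a) bl)
  | case_inr (b bl br : Tm C) : BetaBase (.case (.inr b) bl br) (subst (sub0 b) br)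

/-- The commuting-conversion rules. -/
inductive CCBase : Tm C → Tm C → Prop
  | raise (e : Elim C) (t : Tm C) : CCBase (plug e (.raise t)) (.raise t)
  | case (e : Elim C) (s bl br : Tm C) :
      CCBase (plug e (.case s bl br))
        (.case s (plug (weakenElim e) bl) (plug (weakenElim e) br))

/-- Congruence closure of a base relation on terms. -/
inductive Cong (R : Tm C → Tm C → Prop) : Tm C → Tm C → Prop
  | base : R t u → Cong R t u
  | pairL : Cong R t t' → Cong R (.pair t u) (.pair t' u)
  | pairR : Cong R u u' → Cong R (.pair t u) (.pair t u')
  | proj1 : Cong R t t' → Cong R (.proj1 t) (.proj1 t')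
  | proj2 : Cong R t t' → Cong R (.proj2 t) (.proj2 t')
  | lam : Cong R t t' → Cong R (.lam t) (.lam t')
  | appL : Cong R t t' → Cong R (.app t u) (.app t' u)
  | appR : Cong R u u' → Cong R (.app t u) (.app t u')
  | inl : Cong R t t' → Cong R (.inl t) (.inl t')
  | inr : Cong R t t' → Cong R (.inr t) (.inr t')
  | raise : Cong R t t' → Cong R (.raise t) (.raise t')
  | caseS : Cong R s s' → Cong R (.case s bl br) (.case s' bl br)
  | caseL : Cong R bl bl' → Cong R (.case s bl br) (.case s bl' br)
  | caseR : Cong R br br' → Cong R (.case s bl br) (.case s bl br')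

/-- One-step β-reduction. -/
def StepBeta : Tm C → Tm C → Prop := Cong BetaBase

/-- One-step commuting-conversion reduction. -/
def StepCC : Tm C → Tm C → Prop := Cong CCBase

/-- One-step reduction (β-rules together with commuting conversions). -/
def Step : Tm C → Tm C → Prop := Cong (fun t u => BetaBase t u ∨ CCBase t u)

/-- Reflexive-transitive closures. -/
def RedsBeta : Tm C → Tm C → Prop := Relation.ReflTransGen StepBeta
def RedsCC : Tm C → Tm C → Prop := Relation.ReflTransGen StepCC
def Reds : Tm C → Tm C → Prop := Relation.ReflTransGen Step

/-- Typing judgment `Γ ⊢ t : A` over a language given by `tyof : C → Ty B`.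
Contexts are lists of types, the head being the last-bound variable. -/
inductive HasType (tyof : C → Ty B) : List (Ty B) → Tm C → Ty B → Prop
  | cst (Γ) (c : C) : HasType tyof Γ (.cst c) (tyof c)
  | var : Γ[n]? = some A → HasType tyof Γ (.var n) A
  | star : HasType tyof Γ .star .unit
  | pair : HasType tyof Γ t A → HasType tyof Γ u A' →
      HasType tyof Γ (.pair t u) (.prod A A')
  | proj1 : HasType tyof Γ p (.prod A A') → HasType tyof Γ (.proj1 p) A
  | proj2 : HasType tyof Γ p (.prod A A') → HasType tyof Γ (.proj2 p) A'
  | lam : HasType tyof (A :: Γ) t A' → HasType tyof Γ (.lam t) (.arr A A')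
  | app : HasType tyof Γ t (.arr A A') → HasType tyof Γ u A →
      HasType tyof Γ (.app t u) A'
  | raise : HasType tyof Γ t .empty → HasType tyof Γ (.raise t) A
  | inl : HasType tyof Γ a A → HasType tyof Γ (.inl a) (.sum A A')
  | inr : HasType tyof Γ b A' → HasType tyof Γ (.inr b) (.sum A A')
  | case : HasType tyof Γ s (.sum A A') → HasType tyof (A :: Γ) bl T →
      HasType tyof (A' :: Γ) br T → HasType tyof Γ (.case s bl br) T

mutual
  /-- Bidirectional checking judgment `Γ ⊢ t ⇐ A` (normal forms). -/
  inductive Check (tyof : C → Ty B) : List (Ty B) → Tm C → Ty B → Prop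
    | star : Check tyof Γ .star .unit
    | pair : Check tyof Γ t A → Check tyof Γ u A' →
        Check tyof Γ (.pair t u) (.prod A A')
    | lam : Check tyof (A :: Γ) t A' → Check tyof Γ (.lam t) (.arr A A')
    | inl : Check tyof Γ a A → Check tyof Γ (.inl a) (.sum A A')
    | inr : Check tyof Γ b A' → Check tyof Γ (.inr b) (.sum A A')
    | demote : Infer tyof Γ t A → A = A' → Check tyof Γ t A'
    | raise : Infer tyof Γ t .empty → Check tyof Γ (.raise t) A
    | case : Infer tyof Γ s (.sum A A') → Check tyof (A :: Γ) bl T →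
        Check tyof (A' :: Γ) br T → Check tyof Γ (.case s bl br) T

  /-- Bidirectional inference judgment `Γ ⊢ t ⇒ A` (neutral forms). -/
  inductive Infer (tyof : C → Ty B) : List (Ty B) → Tm C → Ty B → Prop
    | cst (Γ) (c : C) : Infer tyof Γ (.cst c) (tyof c)
    | var : Γ[n]? = some A → Infer tyof Γ (.var n) A
    | proj1 : Infer tyof Γ p (.prod A A') → Infer tyof Γ (.proj1 p) A
    | proj2 : Infer tyof Γ p (.prod A A') → Infer tyof Γ (.proj2 p) A'
    | app : Infer tyof Γ t (.arr A A') → Check tyof Γ u A →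
        Infer tyof Γ (.app t u) A'
end

/-- The substitution replacing the last variable by `inl` of itself
(used in the η-law for sums). -/
def inlSub : Nat → Tm C
  | 0 => .inl (.var 0)
  | n + 1 => .var (n + 1)

/-- The substitution replacing the last variable by `inr` of itself. -/
def inrSub : Nat → Tm C
  | 0 => .inr (.var 0)
  | n + 1 => .var (n + 1)

/-- Conversion `Γ ⊢ t ≡ u : A`: the least congruent equivalence relation on
well-typed terms containing the β and η laws for all type formers
(the equational theory of bicartesian closed categories). -/
inductive Conv (tyof : C → Ty B) : List (Ty B) → Tm C → Tm C → Ty B → Prop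
  | refl : HasType tyof Γ t A → Conv tyof Γ t t A
  | symm : Conv tyof Γ t u A → Conv tyof Γ u t A
  | trans : Conv tyof Γ t u A → Conv tyof Γ u v A → Conv tyof Γ t v A
  -- congruence
  | pair : Conv tyof Γ t t' A → Conv tyof Γ u u' A' →
      Conv tyof Γ (.pair t u) (.pair t' u') (.prod A A')
  | proj1 : Conv tyof Γ p p' (.prod A A') → Conv tyof Γ (.proj1 p) (.proj1 p') A
  | proj2 : Conv tyof Γ p p' (.prod A A') → Conv tyof Γ (.proj2 p) (.proj2 p') A'
  | lam : Conv tyof (A :: Γ) t t' A' → Conv tyof Γ (.lam t) (.lam t') (.arr A A')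
  | app : Conv tyof Γ t t' (.arr A A') → Conv tyof Γ u u' A →
      Conv tyof Γ (.app t u) (.app t' u') A'
  | inl : Conv tyof Γ a a' A → Conv tyof Γ (.inl a) (.inl a') (.sum A A')
  | inr : Conv tyof Γ b b' A' → Conv tyof Γ (.inr b) (.inr b') (.sum A A')
  | raise : Conv tyof Γ t t' .empty → Conv tyof Γ (.raise t) (.raise t') A
  | case : Conv tyof Γ s s' (.sum A A') → Conv tyof (A :: Γ) bl bl' T →
      Conv tyof (A' :: Γ) br br' T →
      Conv tyof Γ (.case s bl br) (.case s' bl' br') T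
  -- β laws
  | beta_proj1 : HasType tyof Γ t A → HasType tyof Γ u A' →
      Conv tyof Γ (.proj1 (.pair t u)) t A
  | beta_proj2 : HasType tyof Γ t A → HasType tyof Γ u A' →
      Conv tyof Γ (.proj2 (.pair t u)) u A'
  | beta_app : HasType tyof (A :: Γ) t A' → HasType tyof Γ u A →
      Conv tyof Γ (.app (.lam t) u) (subst (sub0 u) t) A'
  | beta_inl : HasType tyof Γ a A → HasType tyof (A :: Γ) bl T →
      HasType tyof (A' :: Γ) br T →
      Conv tyof Γ (.case (.inl a) bl br) (subst (sub0 a) bl) T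
  | beta_inr : HasType tyof Γ b A' → HasType tyof (A :: Γ) bl T →
      HasType tyof (A' :: Γ) br T →
      Conv tyof Γ (.case (.inr b) bl br) (subst (sub0 b) br) T
  -- η laws
  | eta_unit : HasType tyof Γ t .unit → Conv tyof Γ t .star .unit
  | eta_prod : HasType tyof Γ t (.prod A A') →
      Conv tyof Γ t (.pair (.proj1 t) (.proj2 t)) (.prod A A')
  | eta_arr : HasType tyof Γ t (.arr A A') →
      Conv tyof Γ t (.lam (.app (rename Nat.succ t) (.var 0))) (.arr A A')
  | eta_empty : HasType tyof Γ s .empty → HasType tyof Γ u T →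
      Conv tyof Γ u (.raise s) T
  | eta_sum : HasType tyof Γ s (.sum A A') → HasType tyof (.sum A A' :: Γ) u T →
      Conv tyof Γ (subst (sub0 s) u)
        (.case s (subst inlSub u) (subst inrSub u)) T

/-- `t` is covered by the predicate `F`: `t` is a case tree whose nodes are
eliminations of neutrals at positive types and whose leaves satisfy `F`
(in suitably extended contexts). -/
inductive Covered (tyof : C → Ty B) (F : List (Ty B) → Tm C → Prop) :
    List (Ty B) → Tm C → Prop
  | leaf : F Γ t → Covered tyof F Γ t
  | raise : Infer tyof Γ n .empty → Covered tyof F Γ (.raise n)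
  | case : Infer tyof Γ n (.sum A A') → Covered tyof F (A :: Γ) bl →
      Covered tyof F (A' :: Γ) br → Covered tyof F Γ (.case n bl br)

/-- `ρ` is a (typed) renaming from `Δ` to `Γ`. -/
def IsRen (ρ : Nat → Nat) (Δ Γ : List (Ty B)) : Prop :=
  ∀ n A, Γ[n]? = some A → Δ[ρ n]? = some A

/-- Values at a type, defined by induction on the type (logical relation). -/
def Value (tyof : C → Ty B) : Ty B → List (Ty B) → Tm C → Prop
  | .base b => Covered tyof (fun Δ u => Infer tyof Δ u (.base b))
  | .empty => Covered tyof (fun Δ u => Infer tyof Δ u .empty)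
  | .sum A A' => Covered tyof (fun Δ u =>
      Infer tyof Δ u (.sum A A') ∨
      (∃ a, u = .inl a ∧ Value tyof A Δ a) ∨
      (∃ b, u = .inr b ∧ Value tyof A' Δ b))
  | .unit => fun Γ t => Check tyof Γ t .unit
  | .prod A A' => fun Γ t => Check tyof Γ t (.prod A A') ∧
      (∃ v, Reds (.proj1 t) v ∧ Value tyof A Γ v) ∧
      (∃ v, Reds (.proj2 t) v ∧ Value tyof A' Γ v)
  | .arr A A' => fun Γ t => Check tyof Γ t (.arr A A') ∧
      ∀ Δ ρ, IsRen ρ Δ Γ → ∀ u, Value tyof A Δ u →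
        ∃ v, Reds (.app (rename ρ t) u) v ∧ Value tyof A' Δ v

/-- `t` is reducible at `T` in `Γ`: it reduces to a value at `T`. -/
def Reducible (tyof : C → Ty B) (T : Ty B) (Γ : List (Ty B)) (t : Tm C) : Prop :=
  ∃ v, Reds t v ∧ Value tyof T Γ v

/-- Polarised vocabulary of a type: `voc true A = A⁺`, `voc false A = A⁻`. -/
def voc (p : Bool) : Ty B → Set B
  | .base b => if p then {b} else ∅
  | .unit => ∅
  | .empty => ∅
  | .prod A A' => voc p A ∪ voc p A'
  | .sum A A' => voc p A ∪ voc p A'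
  | .arr A A' => voc (!p) A ∪ voc p A'

/-- Polarised vocabulary of a context. -/
def vocCtx (p : Bool) (Γ : List (Ty B)) : Set B :=
  {b | ∃ A ∈ Γ, b ∈ voc p A}

/-- Context partitions `Γ = Γs ⋈ Γt`. -/
inductive Splits {B : Type} : List (Ty B) → List (Ty B) → List (Ty B) → Type
  | nil : Splits [] [] []
  | left (A : Ty B) : Splits Γ Γs Γt → Splits (A :: Γ) (A :: Γs) Γt
  | right (A : Ty B) : Splits Γ Γs Γt → Splits (A :: Γ) Γs (A :: Γt)

/-- The renaming embedding `Γs` into `Γ` induced by a partition. -/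
def Splits.renS {B : Type} : {Γ Γs Γt : List (Ty B)} → Splits Γ Γs Γt → Nat → Nat
  | _, _, _, .nil => id
  | _, _, _, .left _ s => fun n => match n with | 0 => 0 | m + 1 => s.renS m + 1
  | _, _, _, .right _ s => fun n => s.renS n + 1

/-- The renaming embedding `Γt` into `Γ` induced by a partition. -/
def Splits.renT {B : Type} : {Γ Γs Γt : List (Ty B)} → Splits Γ Γs Γt → Nat → Nat
  | _, _, _, .nil => id
  | _, _, _, .left _ s => fun n => s.renT n + 1
  | _, _, _, .right _ s => fun n => match n with | 0 => 0 | m + 1 => s.renT m + 1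

/-- The composite `r[l..]` where `l` lives in one part of the context
(embedded via `ρl`) and the tail variables of `r` live in the other part
(embedded via `ρr`); the result lives in the full context. -/
def splice (ρl ρr : Nat → Nat) (l r : Tm C) : Tm C :=
  subst (fun n => match n with
    | 0 => rename ρl l
    | m + 1 => .var (ρr m)) r

/-- The (empty) constant-typing function for a language without constants. -/
def noCst {B : Type} : Empty → Ty B := fun c => c.elim

/-- The set of constants occurring in a term. -/
def constsOf : Tm C → Set C
  | .cst c => {c}
  | .var _ => ∅
  | .star => ∅
  | .pair t u => constsOf t ∪ constsOf u
  | .proj1 t => constsOf t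
  | .proj2 t => constsOf t
  | .lam t => constsOf t
  | .app t u => constsOf t ∪ constsOf u
  | .inl t => constsOf t
  | .inr t => constsOf t
  | .raise t => constsOf t
  | .case s bl br => constsOf s ∪ constsOf bl ∪ constsOf br


/-! ### Substitution calculus -/

theorem liftRen_ext {ρ ρ' : Nat → Nat} (h : ∀ n, ρ n = ρ' n) :
    ∀ n, liftRen ρ n = liftRen ρ' n := by
  intro n; cases n <;> simp [liftRen, h]

theorem rename_ext {ρ ρ' : Nat → Nat} (t : Tm C) (h : ∀ n, ρ n = ρ' n) :
    rename ρ t = rename ρ' t := by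
  induction t generalizing ρ ρ' with
  | cst c => rfl
  | var n => simp [rename, h]
  | star => rfl
  | pair t u iht ihu => simp only [rename]; rw [iht h, ihu h]
  | proj1 t ih => simp only [rename]; rw [ih h]
  | proj2 t ih => simp only [rename]; rw [ih h]
  | lam t ih => simp only [rename]; rw [ih (liftRen_ext h)]
  | app t u iht ihu => simp only [rename]; rw [iht h, ihu h]
  | inl t ih => simp only [rename]; rw [ih h]
  | inr t ih => simp only [rename]; rw [ih h]
  | raise t ih => simp only [rename]; rw [ih h]
  | case s bl br ihs ihl ihr =>
      simp only [rename]; rw [ihs h, ihl (liftRen_ext h), ihr (liftRen_ext h)]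

theorem liftRen_comp {ρ ρ' ρ'' : Nat → Nat} (h : ∀ n, ρ (ρ' n) = ρ'' n) :
    ∀ n, liftRen ρ (liftRen ρ' n) = liftRen ρ'' n := by
  intro n; cases n <;> simp [liftRen, h]

theorem rename_rename' {ρ ρ' ρ'' : Nat → Nat} (t : Tm C)
    (h : ∀ n, ρ (ρ' n) = ρ'' n) :
    rename ρ (rename ρ' t) = rename ρ'' t := by
  induction t generalizing ρ ρ' ρ'' with
  | cst c => rfl
  | var n => simp [rename, h]
  | star => rfl
  | pair t u iht ihu => simp only [rename]; rw [iht h, ihu h]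
  | proj1 t ih => simp only [rename]; rw [ih h]
  | proj2 t ih => simp only [rename]; rw [ih h]
  | lam t ih => simp only [rename]; rw [ih (liftRen_comp h)]
  | app t u iht ihu => simp only [rename]; rw [iht h, ihu h]
  | inl t ih => simp only [rename]; rw [ih h]
  | inr t ih => simp only [rename]; rw [ih h]
  | raise t ih => simp only [rename]; rw [ih h]
  | case s bl br ihs ihl ihr =>
      simp only [rename]; rw [ihs h, ihl (liftRen_comp h), ihr (liftRen_comp h)]

theorem liftSub_ext {σ σ' : Nat → Tm C} (h : ∀ n, σ n = σ' n) :
    ∀ n, liftSub σ n = liftSub σ' n := by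
  intro n; cases n <;> simp [liftSub, h]

theorem subst_ext {σ σ' : Nat → Tm C} (t : Tm C) (h : ∀ n, σ n = σ' n) :
    subst σ t = subst σ' t := by
  induction t generalizing σ σ' with
  | cst c => rfl
  | var n => simp [subst, h]
  | star => rfl
  | pair t u iht ihu => simp only [subst]; rw [iht h, ihu h]
  | proj1 t ih => simp only [subst]; rw [ih h]
  | proj2 t ih => simp only [subst]; rw [ih h]
  | lam t ih => simp only [subst]; rw [ih (liftSub_ext h)]
  | app t u iht ihu => simp only [subst]; rw [iht h, ihu h]
  | inl t ih => simp only [subst]; rw [ih h]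
  | inr t ih => simp only [subst]; rw [ih h]
  | raise t ih => simp only [subst]; rw [ih h]
  | case s bl br ihs ihl ihr =>
      simp only [subst]; rw [ihs h, ihl (liftSub_ext h), ihr (liftSub_ext h)]

theorem liftSub_ren {σ μ : Nat → Tm C} {ρ : Nat → Nat}
    (h : ∀ n, σ (ρ n) = μ n) :
    ∀ n, liftSub σ (liftRen ρ n) = liftSub μ n := by
  intro n; cases n <;> simp [liftSub, liftRen, h]

theorem subst_rename' {σ μ : Nat → Tm C} {ρ : Nat → Nat} (t : Tm C)
    (h : ∀ n, σ (ρ n) = μ n) :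
    subst σ (rename ρ t) = subst μ t := by
  induction t generalizing σ μ ρ with
  | cst c => rfl
  | var n => simp [rename, subst, h]
  | star => rfl
  | pair t u iht ihu => simp only [rename, subst]; rw [iht h, ihu h]
  | proj1 t ih => simp only [rename, subst]; rw [ih h]
  | proj2 t ih => simp only [rename, subst]; rw [ih h]
  | lam t ih => simp only [rename, subst]; rw [ih (liftSub_ren h)]
  | app t u iht ihu => simp only [rename, subst]; rw [iht h, ihu h]
  | inl t ih => simp only [rename, subst]; rw [ih h]
  | inr t ih => simp only [rename, subst]; rw [ih h]
  | raise t ih => simp only [rename, subst]; rw [ih h]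
  | case s bl br ihs ihl ihr =>
      simp only [rename, subst]
      rw [ihs h, ihl (liftSub_ren h), ihr (liftSub_ren h)]

theorem liftRen_liftSub {ρ : Nat → Nat} {σ μ : Nat → Tm C}
    (h : ∀ n, rename ρ (σ n) = μ n) :
    ∀ n, rename (liftRen ρ) (liftSub σ n) = liftSub μ n := by
  intro n
  cases n with
  | zero => rfl
  | succ n =>
      simp only [liftSub]
      rw [rename_rename' (σ n) (fun k => rfl), ← h n,
        rename_rename' (σ n) (fun k => rfl)]
      exact rename_ext _ (fun k => rfl)

theorem rename_subst' {ρ : Nat → Nat} {σ μ : Nat → Tm C} (t : Tm C)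
    (h : ∀ n, rename ρ (σ n) = μ n) :
    rename ρ (subst σ t) = subst μ t := by
  induction t generalizing ρ σ μ with
  | cst c => rfl
  | var n => simp [rename, subst, h]
  | star => rfl
  | pair t u iht ihu => simp only [rename, subst]; rw [iht h, ihu h]
  | proj1 t ih => simp only [rename, subst]; rw [ih h]
  | proj2 t ih => simp only [rename, subst]; rw [ih h]
  | lam t ih => simp only [rename, subst]; rw [ih (liftRen_liftSub h)]
  | app t u iht ihu => simp only [rename, subst]; rw [iht h, ihu h]
  | inl t ih => simp only [rename, subst]; rw [ih h]
  | inr t ih => simp only [rename, subst]; rw [ih h]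
  | raise t ih => simp only [rename, subst]; rw [ih h]
  | case s bl br ihs ihl ihr =>
      simp only [rename, subst]
      rw [ihs h, ihl (liftRen_liftSub h), ihr (liftRen_liftSub h)]

theorem liftSub_comp {σ τ μ : Nat → Tm C}
    (h : ∀ n, subst σ (τ n) = μ n) :
    ∀ n, subst (liftSub σ) (liftSub τ n) = liftSub μ n := by
  intro n
  cases n with
  | zero => rfl
  | succ n =>
      simp only [liftSub]
      rw [subst_rename' (τ n) (fun k => rfl), ← h n]
      exact (rename_subst' (τ n) (fun k => rfl)).symm

theorem subst_subst' {σ τ μ : Nat → Tm C} (t : Tm C)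
    (h : ∀ n, subst σ (τ n) = μ n) :
    subst σ (subst τ t) = subst μ t := by
  induction t generalizing σ τ μ with
  | cst c => rfl
  | var n => simp [subst, h]
  | star => rfl
  | pair t u iht ihu => simp only [subst]; rw [iht h, ihu h]
  | proj1 t ih => simp only [subst]; rw [ih h]
  | proj2 t ih => simp only [subst]; rw [ih h]
  | lam t ih => simp only [subst]; rw [ih (liftSub_comp h)]
  | app t u iht ihu => simp only [subst]; rw [iht h, ihu h]
  | inl t ih => simp only [subst]; rw [ih h]
  | inr t ih => simp only [subst]; rw [ih h]
  | raise t ih => simp only [subst]; rw [ih h]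
  | case s bl br ihs ihl ihr =>
      simp only [subst]
      rw [ihs h, ihl (liftSub_comp h), ihr (liftSub_comp h)]

theorem liftSub_var {ρ : Nat → Nat} {σ : Nat → Tm C}
    (h : ∀ n, Tm.var (ρ n) = σ n) :
    ∀ n, Tm.var (liftRen ρ n) = liftSub σ n := by
  intro n
  cases n with
  | zero => rfl
  | succ n =>
      show Tm.var (ρ n + 1) = rename Nat.succ (σ n)
      rw [← h n]; rfl

theorem rename_eq_subst' {ρ : Nat → Nat} {σ : Nat → Tm C} (t : Tm C)
    (h : ∀ n, Tm.var (ρ n) = σ n) :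
    rename ρ t = subst σ t := by
  induction t generalizing ρ σ with
  | cst c => rfl
  | var n => simp [rename, subst, h]
  | star => rfl
  | pair t u iht ihu => simp only [rename, subst]; rw [iht h, ihu h]
  | proj1 t ih => simp only [rename, subst]; rw [ih h]
  | proj2 t ih => simp only [rename, subst]; rw [ih h]
  | lam t ih =>
      simp only [rename, subst]
      rw [ih (liftSub_var h)]
  | app t u iht ihu => simp only [rename, subst]; rw [iht h, ihu h]
  | inl t ih => simp only [rename, subst]; rw [ih h]
  | inr t ih => simp only [rename, subst]; rw [ih h]
  | raise t ih => simp only [rename, subst]; rw [ih h]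
  | case s bl br ihs ihl ihr =>
      simp only [rename, subst]
      rw [ihs h, ihl (liftSub_var h), ihr (liftSub_var h)]
/-! ### Typing under renamings and substitutions -/

variable {tyof : C → Ty B}

theorem IsRen.lift {ρ : Nat → Nat} {Δ Γ : List (Ty B)} (h : IsRen ρ Δ Γ)
    (A : Ty B) : IsRen (liftRen ρ) (A :: Δ) (A :: Γ) := by
  intro n T hn
  cases n with
  | zero => simpa [liftRen] using hn
  | succ n => simpa [liftRen] using h n T (by simpa using hn)

theorem IsRen.succ (Δ : List (Ty B)) (A : Ty B) :
    IsRen Nat.succ (A :: Δ) Δ := by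
  intro n T hn; simpa using hn

theorem HasType.rename' {Γ : List (Ty B)} {t : Tm C} {A : Ty B}
    (h : HasType tyof Γ t A) :
    ∀ {Δ : List (Ty B)} {ρ : Nat → Nat}, IsRen ρ Δ Γ →
      HasType tyof Δ (rename ρ t) A := by
  induction h with
  | cst Γ c => exact fun _ => HasType.cst _ c
  | var hn => exact fun hρ => HasType.var (hρ _ _ hn)
  | star => exact fun _ => HasType.star
  | pair _ _ iht ihu => exact fun hρ => HasType.pair (iht hρ) (ihu hρ)
  | proj1 _ ih => exact fun hρ => HasType.proj1 (ih hρ)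
  | proj2 _ ih => exact fun hρ => HasType.proj2 (ih hρ)
  | lam _ ih => exact fun hρ => HasType.lam (ih (hρ.lift _))
  | app _ _ iht ihu => exact fun hρ => HasType.app (iht hρ) (ihu hρ)
  | raise _ ih => exact fun hρ => HasType.raise (ih hρ)
  | inl _ ih => exact fun hρ => HasType.inl (ih hρ)
  | inr _ ih => exact fun hρ => HasType.inr (ih hρ)
  | case _ _ _ ihs ihl ihr =>
      exact fun hρ => HasType.case (ihs hρ) (ihl (hρ.lift _)) (ihr (hρ.lift _))

/-- `σ` is a typed substitution from `Δ` to `Γ`. -/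
def IsSub (tyof : C → Ty B) (σ : Nat → Tm C) (Δ Γ : List (Ty B)) : Prop :=
  ∀ n A, Γ[n]? = some A → HasType tyof Δ (σ n) A

theorem IsSub.lift {σ : Nat → Tm C} {Δ Γ : List (Ty B)}
    (h : IsSub tyof σ Δ Γ) (A : Ty B) :
    IsSub tyof (liftSub σ) (A :: Δ) (A :: Γ) := by
  intro n T hn
  cases n with
  | zero =>
      simp only [List.getElem?_cons_zero, Option.some.injEq] at hn
      exact HasType.var (by simp [hn])
  | succ n =>
      simp only [List.getElem?_cons_succ] at hn
      exact (h n T hn).rename' (IsRen.succ Δ A)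

theorem HasType.subst' {Γ : List (Ty B)} {t : Tm C} {A : Ty B}
    (h : HasType tyof Γ t A) :
    ∀ {Δ : List (Ty B)} {σ : Nat → Tm C}, IsSub tyof σ Δ Γ →
      HasType tyof Δ (subst σ t) A := by
  induction h with
  | cst Γ c => exact fun _ => HasType.cst _ c
  | var hn => exact fun hσ => hσ _ _ hn
  | star => exact fun _ => HasType.star
  | pair _ _ iht ihu => exact fun hσ => HasType.pair (iht hσ) (ihu hσ)
  | proj1 _ ih => exact fun hσ => HasType.proj1 (ih hσ)
  | proj2 _ ih => exact fun hσ => HasType.proj2 (ih hσ)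
  | lam _ ih => exact fun hσ => HasType.lam (ih (hσ.lift _))
  | app _ _ iht ihu => exact fun hσ => HasType.app (iht hσ) (ihu hσ)
  | raise _ ih => exact fun hσ => HasType.raise (ih hσ)
  | inl _ ih => exact fun hσ => HasType.inl (ih hσ)
  | inr _ ih => exact fun hσ => HasType.inr (ih hσ)
  | case _ _ _ ihs ihl ihr =>
      exact fun hσ => HasType.case (ihs hσ) (ihl (hσ.lift _)) (ihr (hσ.lift _))

/-- Soundness of bidirectional typing. -/
theorem check_hasType {Γ : List (Ty B)} {t : Tm C} {A : Ty B}
    (h : Check tyof Γ t A) : HasType tyof Γ t A := by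
  refine Check.rec (tyof := tyof)
    (motive_1 := fun Γ t A _ => HasType tyof Γ t A)
    (motive_2 := fun Γ t A _ => HasType tyof Γ t A)
    ?_ ?_ ?_ ?_ ?_ ?_ ?_ ?_ ?_ ?_ ?_ ?_ ?_ h
  · exact fun {Γ} => HasType.star
  · exact fun _ _ iht ihu => HasType.pair iht ihu
  · exact fun _ ih => HasType.lam ih
  · exact fun _ ih => HasType.inl ih
  · exact fun _ ih => HasType.inr ih
  · exact fun _ e ih => e ▸ ih
  · exact fun _ ih => HasType.raise ih
  · exact fun _ _ _ ihs ihl ihr => HasType.case ihs ihl ihr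
  · exact fun Γ c => HasType.cst Γ c
  · exact fun hn => HasType.var hn
  · exact fun _ ih => HasType.proj1 ih
  · exact fun _ ih => HasType.proj2 ih
  · exact fun _ _ iht ihu => HasType.app iht ihu

theorem infer_hasType {Γ : List (Ty B)} {t : Tm C} {A : Ty B}
    (h : Infer tyof Γ t A) : HasType tyof Γ t A := by
  refine Infer.rec (tyof := tyof)
    (motive_1 := fun Γ t A _ => HasType tyof Γ t A)
    (motive_2 := fun Γ t A _ => HasType tyof Γ t A)
    ?_ ?_ ?_ ?_ ?_ ?_ ?_ ?_ ?_ ?_ ?_ ?_ ?_ h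
  · exact fun {Γ} => HasType.star
  · exact fun _ _ iht ihu => HasType.pair iht ihu
  · exact fun _ ih => HasType.lam ih
  · exact fun _ ih => HasType.inl ih
  · exact fun _ ih => HasType.inr ih
  · exact fun _ e ih => e ▸ ih
  · exact fun _ ih => HasType.raise ih
  · exact fun _ _ _ ihs ihl ihr => HasType.case ihs ihl ihr
  · exact fun Γ c => HasType.cst Γ c
  · exact fun hn => HasType.var hn
  · exact fun _ ih => HasType.proj1 ih
  · exact fun _ ih => HasType.proj2 ih
  · exact fun _ _ iht ihu => HasType.app iht ihu

/-! ### Splits -/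

theorem Splits.isRenS {Γ Γs Γt : List (Ty B)} (s : Splits Γ Γs Γt) :
    IsRen s.renS Γ Γs := by
  induction s with
  | nil => intro n A hn; simp at hn
  | left A s ih =>
      intro n T hn
      cases n with
      | zero => simpa [Splits.renS] using hn
      | succ n =>
          simp only [List.getElem?_cons_succ] at hn
          simpa [Splits.renS] using ih n T hn
  | right A s ih =>
      intro n T hn
      simpa [Splits.renS] using ih n T hn

theorem Splits.isRenT {Γ Γs Γt : List (Ty B)} (s : Splits Γ Γs Γt) :
    IsRen s.renT Γ Γt := by
  induction s with
  | nil => intro n A hn; simp at hn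
  | left A s ih =>
      intro n T hn
      simpa [Splits.renT] using ih n T hn
  | right A s ih =>
      intro n T hn
      cases n with
      | zero => simpa [Splits.renT] using hn
      | succ n =>
          simp only [List.getElem?_cons_succ] at hn
          simpa [Splits.renT] using ih n T hn

/-- Every variable of `Γ` comes from `Γs` or from `Γt`. -/
theorem Splits.var_cases {Γ Γs Γt : List (Ty B)} (s : Splits Γ Γs Γt)
    {n : Nat} {A : Ty B} (h : Γ[n]? = some A) :
    (∃ m, Γs[m]? = some A ∧ s.renS m = n) ∨
    (∃ m, Γt[m]? = some A ∧ s.renT m = n) := by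
  induction s generalizing n with
  | nil => simp at h
  | left A' s ih =>
      cases n with
      | zero =>
          simp only [List.getElem?_cons_zero, Option.some.injEq] at h
          exact Or.inl ⟨0, by simp [h], rfl⟩
      | succ n =>
          simp only [List.getElem?_cons_succ] at h
          rcases ih h with ⟨m, hm, hr⟩ | ⟨m, hm, hr⟩
          · exact Or.inl ⟨m + 1, by simpa using hm, by simp [Splits.renS, hr]⟩
          · exact Or.inr ⟨m, hm, by simp [Splits.renT, hr]⟩
  | right A' s ih =>
      cases n with
      | zero =>
          simp only [List.getElem?_cons_zero, Option.some.injEq] at h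
          exact Or.inr ⟨0, by simp [h], rfl⟩
      | succ n =>
          simp only [List.getElem?_cons_succ] at h
          rcases ih h with ⟨m, hm, hr⟩ | ⟨m, hm, hr⟩
          · exact Or.inl ⟨m, hm, by simp [Splits.renS, hr]⟩
          · exact Or.inr ⟨m + 1, by simpa using hm, by simp [Splits.renT, hr]⟩

/-- Flipping a partition. -/
def Splits.flip {Γ Γs Γt : List (Ty B)} : Splits Γ Γs Γt → Splits Γ Γt Γs
  | .nil => .nil
  | .left A s => .right A s.flip
  | .right A s => .left A s.flip

theorem Splits.flip_renS {Γ Γs Γt : List (Ty B)} (s : Splits Γ Γs Γt) :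
    ∀ n, s.flip.renS n = s.renT n := by
  induction s with
  | nil => intro n; rfl
  | left A s ih => intro n; simp [Splits.flip, Splits.renS, Splits.renT, ih]
  | right A s ih =>
      intro n
      cases n with
      | zero => rfl
      | succ n => simp [Splits.flip, Splits.renS, Splits.renT, ih]

theorem Splits.flip_renT {Γ Γs Γt : List (Ty B)} (s : Splits Γ Γs Γt) :
    ∀ n, s.flip.renT n = s.renS n := by
  induction s with
  | nil => intro n; rfl
  | left A s ih =>
      intro n
      cases n with
      | zero => rfl
      | succ n => simp [Splits.flip, Splits.renS, Splits.renT, ih]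
  | right A s ih => intro n; simp [Splits.flip, Splits.renS, Splits.renT, ih]

/-! ### Vocabulary lemmas -/

theorem vocCtx_cons {p : Bool} {A : Ty B} {Γ : List (Ty B)} :
    vocCtx p (A :: Γ) = voc p A ∪ vocCtx p Γ := by
  ext b
  simp only [vocCtx, Set.mem_setOf_eq, Set.mem_union, List.mem_cons]
  constructor
  · rintro ⟨A', (rfl | hA'), hb⟩
    · exact Or.inl hb
    · exact Or.inr ⟨A', hA', hb⟩
  · rintro (hb | ⟨A', hA', hb⟩)
    · exact ⟨A, Or.inl rfl, hb⟩
    · exact ⟨A', Or.inr hA', hb⟩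
/-! ### Commutation equalities -/

theorem rename_sub0 {ρ : Nat → Nat} (t u : Tm C) :
    rename ρ (subst (sub0 u) t)
      = subst (sub0 (rename ρ u)) (rename (liftRen ρ) t) := by
  rw [rename_subst' t (μ := fun n => rename ρ (sub0 u n)) (fun n => rfl),
    subst_rename' t (μ := fun n => sub0 (rename ρ u) (liftRen ρ n)) (fun n => rfl)]
  refine subst_ext t (fun n => ?_)
  cases n <;> rfl

theorem rename_lift_succ {ρ : Nat → Nat} (t : Tm C) :
    rename (liftRen ρ) (rename Nat.succ t) = rename Nat.succ (rename ρ t) := by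
  rw [rename_rename' (ρ := liftRen ρ) (ρ' := Nat.succ) (ρ'' := fun n => ρ n + 1) t (fun n => rfl)]
  exact (rename_rename' t (ρ := Nat.succ) (ρ' := ρ) (ρ'' := fun n => ρ n + 1)
    (fun n => rfl)).symm

theorem rename_inlSub {ρ : Nat → Nat} (u : Tm C) :
    rename (liftRen ρ) (subst inlSub u)
      = subst inlSub (rename (liftRen ρ) u) := by
  rw [rename_subst' u (μ := fun n => rename (liftRen ρ) (inlSub n)) (fun n => rfl),
    subst_rename' u (μ := fun n => inlSub (liftRen ρ n)) (fun n => rfl)]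
  refine subst_ext u (fun n => ?_)
  cases n <;> rfl

theorem rename_inrSub {ρ : Nat → Nat} (u : Tm C) :
    rename (liftRen ρ) (subst inrSub u)
      = subst inrSub (rename (liftRen ρ) u) := by
  rw [rename_subst' u (μ := fun n => rename (liftRen ρ) (inrSub n)) (fun n => rfl),
    subst_rename' u (μ := fun n => inrSub (liftRen ρ n)) (fun n => rfl)]
  refine subst_ext u (fun n => ?_)
  cases n <;> rfl

/-! ### Conversion under renaming -/

theorem Conv.rename' {tyof : C → Ty B} {Γ : List (Ty B)} {t u : Tm C} {A : Ty B}
    (h : Conv tyof Γ t u A) :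
    ∀ {Δ : List (Ty B)} {ρ : Nat → Nat}, IsRen ρ Δ Γ →
      Conv tyof Δ (rename ρ t) (rename ρ u) A := by
  induction h with
  | refl h => exact fun hρ => Conv.refl (h.rename' hρ)
  | symm _ ih => exact fun hρ => Conv.symm (ih hρ)
  | trans _ _ ih1 ih2 => exact fun hρ => Conv.trans (ih1 hρ) (ih2 hρ)
  | pair _ _ ih1 ih2 => exact fun hρ => Conv.pair (ih1 hρ) (ih2 hρ)
  | proj1 _ ih => exact fun hρ => Conv.proj1 (ih hρ)
  | proj2 _ ih => exact fun hρ => Conv.proj2 (ih hρ)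
  | lam _ ih => exact fun hρ => Conv.lam (ih (hρ.lift _))
  | app _ _ ih1 ih2 => exact fun hρ => Conv.app (ih1 hρ) (ih2 hρ)
  | inl _ ih => exact fun hρ => Conv.inl (ih hρ)
  | inr _ ih => exact fun hρ => Conv.inr (ih hρ)
  | raise _ ih => exact fun hρ => Conv.raise (ih hρ)
  | case _ _ _ ihs ihl ihr =>
      exact fun hρ => Conv.case (ihs hρ) (ihl (hρ.lift _)) (ihr (hρ.lift _))
  | beta_proj1 h1 h2 =>
      exact fun hρ => Conv.beta_proj1 (h1.rename' hρ) (h2.rename' hρ)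
  | beta_proj2 h1 h2 =>
      exact fun hρ => Conv.beta_proj2 (h1.rename' hρ) (h2.rename' hρ)
  | beta_app h1 h2 =>
      intro Δ ρ hρ
      rw [show rename ρ (Tm.app (.lam _) _)
          = Tm.app (.lam (rename (liftRen ρ) _)) (rename ρ _) from rfl,
        rename_sub0]
      exact Conv.beta_app (h1.rename' (hρ.lift _)) (h2.rename' hρ)
  | beta_inl h1 h2 h3 =>
      intro Δ ρ hρ
      rw [show rename ρ (Tm.case (.inl _) _ _)
          = Tm.case (.inl (rename ρ _)) (rename (liftRen ρ) _)
              (rename (liftRen ρ) _) from rfl,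
        rename_sub0]
      exact Conv.beta_inl (h1.rename' hρ) (h2.rename' (hρ.lift _))
        (h3.rename' (hρ.lift _))
  | beta_inr h1 h2 h3 =>
      intro Δ ρ hρ
      rw [show rename ρ (Tm.case (.inr _) _ _)
          = Tm.case (.inr (rename ρ _)) (rename (liftRen ρ) _)
              (rename (liftRen ρ) _) from rfl,
        rename_sub0]
      exact Conv.beta_inr (h1.rename' hρ) (h2.rename' (hρ.lift _))
        (h3.rename' (hρ.lift _))
  | eta_unit h1 => exact fun hρ => Conv.eta_unit (h1.rename' hρ)
  | eta_prod h1 => exact fun hρ => Conv.eta_prod (h1.rename' hρ)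
  | eta_arr h1 =>
      intro Δ ρ hρ
      have := Conv.eta_arr (h1.rename' hρ)
      rw [show rename ρ (Tm.lam (.app (rename Nat.succ _) (.var 0)))
          = Tm.lam (.app (rename (liftRen ρ) (rename Nat.succ _))
              (.var 0)) from rfl, rename_lift_succ]
      exact this
  | eta_empty h1 h2 =>
      exact fun hρ => Conv.eta_empty (h1.rename' hρ) (h2.rename' hρ)
  | eta_sum h1 h2 =>
      intro Δ ρ hρ
      have := Conv.eta_sum (h1.rename' hρ) (h2.rename' (hρ.lift _))
      rw [rename_sub0]
      rw [show rename ρ (Tm.case _ (subst inlSub _) (subst inrSub _))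
          = Tm.case (rename ρ _) (rename (liftRen ρ) (subst inlSub _))
              (rename (liftRen ρ) (subst inrSub _)) from rfl,
        rename_inlSub, rename_inrSub]
      exact this

/-- Conversion is closed under pointwise-convertible substitutions. -/
theorem conv_subst {tyof : C → Ty B} {Γ : List (Ty B)} {t : Tm C} {A : Ty B}
    (h : HasType tyof Γ t A) :
    ∀ {Δ : List (Ty B)} {σ τ : Nat → Tm C},
      (∀ n T, Γ[n]? = some T → Conv tyof Δ (σ n) (τ n) T) →
      Conv tyof Δ (subst σ t) (subst τ t) A := by
  have lift : ∀ {Δ : List (Ty B)} {σ τ : Nat → Tm C} {Γ : List (Ty B)},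
      (∀ n T, Γ[n]? = some T → Conv tyof Δ (σ n) (τ n) T) →
      ∀ (A : Ty B) n T, (A :: Γ)[n]? = some T →
        Conv tyof (A :: Δ) (liftSub σ n) (liftSub τ n) T := by
    intro Δ σ τ Γ hστ A n T hn
    cases n with
    | zero =>
        simp only [List.getElem?_cons_zero, Option.some.injEq] at hn
        exact Conv.refl (HasType.var (by simp [hn]))
    | succ n =>
        simp only [List.getElem?_cons_succ] at hn
        exact (hστ n T hn).rename' (IsRen.succ Δ A)
  induction h with
  | cst Γ c => exact fun _ => Conv.refl (HasType.cst _ c)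
  | var hn => exact fun hστ => hστ _ _ hn
  | star => exact fun _ => Conv.refl HasType.star
  | pair _ _ iht ihu => exact fun hστ => Conv.pair (iht hστ) (ihu hστ)
  | proj1 _ ih => exact fun hστ => Conv.proj1 (ih hστ)
  | proj2 _ ih => exact fun hστ => Conv.proj2 (ih hστ)
  | lam _ ih => exact fun hστ => Conv.lam (ih (lift hστ _))
  | app _ _ iht ihu => exact fun hστ => Conv.app (iht hστ) (ihu hστ)
  | raise _ ih => exact fun hστ => Conv.raise (ih hστ)
  | inl _ ih => exact fun hστ => Conv.inl (ih hστ)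
  | inr _ ih => exact fun hστ => Conv.inr (ih hστ)
  | case _ _ _ ihs ihl ihr =>
      exact fun hστ => Conv.case (ihs hστ) (ihl (lift hστ _)) (ihr (lift hστ _))
/-! ### Identity and cancellation lemmas -/

theorem subst_id (t : Tm C) : subst Tm.var t = t := by
  induction t with
  | cst c => rfl
  | var n => rfl
  | star => rfl
  | pair t u iht ihu => simp only [subst]; rw [iht, ihu]
  | proj1 t ih => simp only [subst]; rw [ih]
  | proj2 t ih => simp only [subst]; rw [ih]
  | lam t ih =>
      simp only [subst]
      rw [subst_ext t (σ' := Tm.var) (fun n => by cases n <;> rfl), ih]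
  | app t u iht ihu => simp only [subst]; rw [iht, ihu]
  | inl t ih => simp only [subst]; rw [ih]
  | inr t ih => simp only [subst]; rw [ih]
  | raise t ih => simp only [subst]; rw [ih]
  | case s bl br ihs ihl ihr =>
      simp only [subst]
      rw [subst_ext bl (σ' := Tm.var) (fun n => by cases n <;> rfl),
        subst_ext br (σ' := Tm.var) (fun n => by cases n <;> rfl), ihs, ihl, ihr]

theorem subst_lift_cancel (n x : Tm C) :
    subst (liftSub (sub0 n)) (rename (liftRen Nat.succ) x) = x := by
  rw [subst_rename' x (μ := Tm.var) (fun k => by cases k <;> rfl), subst_id]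

theorem subst_sub0var_cancel (x : Tm C) :
    subst (sub0 (Tm.var 0)) (rename (liftRen Nat.succ) x) = x := by
  rw [subst_rename' x (μ := Tm.var) (fun k => by cases k <;> rfl), subst_id]

theorem subst_liftInl_cancel (x : Tm C) :
    subst (liftSub inlSub) (rename (liftRen Nat.succ) x)
      = rename (liftRen Nat.succ) x := by
  rw [subst_rename' x (μ := fun k => Tm.var (liftRen Nat.succ k))
      (fun k => by cases k <;> rfl)]
  exact (rename_eq_subst' x (fun k => rfl)).symm

theorem subst_liftInr_cancel (x : Tm C) :
    subst (liftSub inrSub) (rename (liftRen Nat.succ) x)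
      = rename (liftRen Nat.succ) x := by
  rw [subst_rename' x (μ := fun k => Tm.var (liftRen Nat.succ k))
      (fun k => by cases k <;> rfl)]
  exact (rename_eq_subst' x (fun k => rfl)).symm

/-! ### A derived commuting conversion: case of case -/

theorem conv_case_case {tyof : C → Ty B} {Γ : List (Ty B)}
    {n c1 c2 d1 d2 : Tm C} {A A' M1 M2 T : Ty B}
    (hn : HasType tyof Γ n (.sum A A'))
    (hc1 : HasType tyof (A :: Γ) c1 (.sum M1 M2))
    (hc2 : HasType tyof (A' :: Γ) c2 (.sum M1 M2))
    (hd1 : HasType tyof (M1 :: Γ) d1 T)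
    (hd2 : HasType tyof (M2 :: Γ) d2 T) :
    Conv tyof Γ (.case (.case n c1 c2) d1 d2)
      (.case n
        (.case c1 (rename (liftRen Nat.succ) d1) (rename (liftRen Nat.succ) d2))
        (.case c2 (rename (liftRen Nat.succ) d1) (rename (liftRen Nat.succ) d2)))
      T := by
  have rs : ∀ (X : Ty B) (x : Tm C), HasType tyof (X :: Γ) x (.sum M1 M2) →
      HasType tyof (X :: (.sum A A' : Ty B) :: Γ) (rename (liftRen Nat.succ) x) (.sum M1 M2) :=
    fun X x hx => hx.rename' ((IsRen.succ Γ (.sum A A')).lift X)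
  have rd : ∀ (X : Ty B) (x : Tm C), HasType tyof (X :: Γ) x T →
      HasType tyof (X :: (.sum A A' : Ty B) :: Γ) (rename (liftRen Nat.succ) x) T :=
    fun X x hx => hx.rename' ((IsRen.succ Γ (.sum A A')).lift X)
  set u : Tm C := .case
      (.case (.var 0) (rename (liftRen Nat.succ) c1) (rename (liftRen Nat.succ) c2))
      (rename (liftRen Nat.succ) d1) (rename (liftRen Nat.succ) d2) with hu
  have hut : HasType tyof ((.sum A A' : Ty B) :: Γ) u T := by
    refine HasType.case (A := M1) (A' := M2) (HasType.case (A := A) (A' := A') (HasType.var (n := 0) (A := (.sum A A' : Ty B)) (by simp)) ?_ ?_) ?_ ?_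
    · exact rs A c1 hc1
    · exact rs A' c2 hc2
    · exact rd M1 d1 hd1
    · exact rd M2 d2 hd2
  have eta := Conv.eta_sum hn hut
  have e1 : subst (sub0 n) u = .case (.case n c1 c2) d1 d2 := by
    simp only [hu, subst, subst_lift_cancel]
    rfl
  have e2 : subst inlSub u
      = .case (.case (.inl (.var 0)) (rename (liftRen Nat.succ) c1)
          (rename (liftRen Nat.succ) c2))
        (rename (liftRen Nat.succ) d1) (rename (liftRen Nat.succ) d2) := by
    simp only [hu, subst, subst_liftInl_cancel]
    rfl
  have e3 : subst inrSub u
      = .case (.case (.inr (.var 0)) (rename (liftRen Nat.succ) c1)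
          (rename (liftRen Nat.succ) c2))
        (rename (liftRen Nat.succ) d1) (rename (liftRen Nat.succ) d2) := by
    simp only [hu, subst, subst_liftInr_cancel]
    rfl
  rw [e1, e2, e3] at eta
  have rdX : ∀ (X Y : Ty B) (x : Tm C), HasType tyof (X :: Γ) x T →
      HasType tyof (X :: Y :: Γ) (rename (liftRen Nat.succ) x) T :=
    fun X Y x hx => hx.rename' ((IsRen.succ Γ Y).lift X)
  refine Conv.trans eta (Conv.case (Conv.refl hn) ?_ ?_)
  · refine Conv.case ?_ (Conv.refl (rdX M1 A d1 hd1)) (Conv.refl (rdX M2 A d2 hd2))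
    have hb := Conv.beta_inl (HasType.var (Γ := A :: Γ) (A := A) (n := 0) (by simp))
      (hc1.rename' ((IsRen.succ Γ A).lift A))
      (hc2.rename' ((IsRen.succ Γ A).lift A'))
    rwa [subst_sub0var_cancel] at hb
  · refine Conv.case ?_ (Conv.refl (rdX M1 A' d1 hd1)) (Conv.refl (rdX M2 A' d2 hd2))
    have hb := Conv.beta_inr (HasType.var (Γ := A' :: Γ) (A := A') (n := 0) (by simp))
      (hc1.rename' ((IsRen.succ Γ A').lift A))
      (hc2.rename' ((IsRen.succ Γ A').lift A'))
    rwa [subst_sub0var_cancel] at hb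
/-! ### Statement abbreviations and splice lemmas -/

/-- The substitution underlying `splice s.renS s.renT l ·`. -/
def sSub {Γ Γs Γt : List (Ty B)} (s : Splits Γ Γs Γt) (l : Tm C) : Nat → Tm C :=
  fun n => match n with
  | 0 => rename s.renS l
  | m + 1 => .var (s.renT m)

theorem splice_def {Γ Γs Γt : List (Ty B)} (s : Splits Γ Γs Γt) (l r : Tm C) :
    splice s.renS s.renT l r = subst (sSub s l) r := rfl

theorem splice_flip {Γ Γs Γt : List (Ty B)} (s : Splits Γ Γs Γt) (l r : Tm C) :
    splice s.flip.renS s.flip.renT l r = splice s.renT s.renS l r := by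
  simp only [splice]
  refine subst_ext r (fun n => ?_)
  cases n with
  | zero =>
      show rename s.flip.renS l = rename s.renT l
      exact rename_ext l s.flip_renS
  | succ m => simp [s.flip_renT m]

/-- Interpolation data for checking (normal forms). -/
def CData (tyof : C → Ty B) {Γ Γs Γt : List (Ty B)} (s : Splits Γ Γs Γt)
    (t : Tm C) (T : Ty B) : Prop :=
  ∃ (M : Ty B) (l r : Tm C),
    HasType tyof Γs l M ∧ HasType tyof (M :: Γt) r T ∧
    Conv tyof Γ (splice s.renS s.renT l r) t T ∧
    ∀ p : Bool, voc p M ⊆ vocCtx p Γs ∩ (vocCtx (!p) Γt ∪ voc p T)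

/-- Interpolation data for inference (one of the two symmetric cases). -/
def IData (tyof : C → Ty B) {Γ Γs Γt : List (Ty B)} (s : Splits Γ Γs Γt)
    (t : Tm C) (T : Ty B) : Prop :=
  (∀ p : Bool, voc p T ⊆ vocCtx p Γt) ∧
  ∃ (M : Ty B) (l r : Tm C),
    HasType tyof Γs l M ∧ HasType tyof (M :: Γt) r T ∧
    Conv tyof Γ (splice s.renS s.renT l r) t T ∧
    ∀ p : Bool, voc p M ⊆ vocCtx p Γs ∩ vocCtx (!p) Γt

/-- The workhorse: replacing the head of a splice by a convertible term. -/
theorem splice_head_conv {tyof : C → Ty B} {Γ Γs Γt : List (Ty B)}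
    (s : Splits Γ Γs Γt) {M T : Ty B} {r : Tm C}
    (hr : HasType tyof (M :: Γt) r T) {e l : Tm C}
    (he : Conv tyof Γ e (rename s.renS l) M) :
    Conv tyof Γ
      (subst (fun n => match n with | 0 => e | m + 1 => .var (s.renT m)) r)
      (splice s.renS s.renT l r) T := by
  rw [splice_def]
  refine conv_subst hr (fun n X hn => ?_)
  cases n with
  | zero =>
      simp only [List.getElem?_cons_zero, Option.some.injEq] at hn
      exact hn ▸ he
  | succ n =>
      simp only [List.getElem?_cons_succ] at hn
      exact Conv.refl (HasType.var (s.isRenT n X hn))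
/-! ### The main cases: checking -/

variable {tyof : C → Ty B}

theorem cdata_star {Γ Γs Γt : List (Ty B)} (s : Splits Γ Γs Γt) :
    CData tyof s (.star : Tm C) .unit := by
  refine ⟨.unit, .star, .star, HasType.star, HasType.star, ?_, ?_⟩
  · exact Conv.refl HasType.star
  · intro p b hb; simp [voc] at hb

theorem cdata_pair {Γ Γs Γt : List (Ty B)} (s : Splits Γ Γs Γt)
    {t u : Tm C} {A A' : Ty B}
    (ht : CData tyof s t A) (hu : CData tyof s u A') :
    CData tyof s (.pair t u) (.prod A A') := by
  obtain ⟨M1, l1, r1, hl1, hr1, hc1, hv1⟩ := ht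
  obtain ⟨M2, l2, r2, hl2, hr2, hc2, hv2⟩ := hu
  refine ⟨.prod M1 M2, .pair l1 l2,
    .pair (subst (fun n => match n with
        | 0 => .proj1 (.var 0) | m + 1 => .var (m + 1)) r1)
      (subst (fun n => match n with
        | 0 => .proj2 (.var 0) | m + 1 => .var (m + 1)) r2),
    HasType.pair hl1 hl2, ?_, ?_, ?_⟩
  · refine HasType.pair (hr1.subst' ?_) (hr2.subst' ?_)
    · intro n X hn
      match n with
      | 0 =>
          simp only [List.getElem?_cons_zero, Option.some.injEq] at hn
          exact hn ▸ HasType.proj1 (A' := M2) (HasType.var (by simp))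
      | (m+1) =>
          simp only [List.getElem?_cons_succ] at hn
          exact HasType.var (by simpa using hn)
    · intro n X hn
      match n with
      | 0 =>
          simp only [List.getElem?_cons_zero, Option.some.injEq] at hn
          exact hn ▸ HasType.proj2 (A := M1) (HasType.var (by simp))
      | (m+1) =>
          simp only [List.getElem?_cons_succ] at hn
          exact HasType.var (by simpa using hn)
  · rw [splice_def]
    simp only [subst]
    rw [subst_subst' r1 (μ := fun n => match n with
        | 0 => .proj1 (rename s.renS (.pair l1 l2)) | m + 1 => .var (s.renT m))
        (fun n => by cases n <;> rfl),
      subst_subst' r2 (μ := fun n => match n with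
        | 0 => .proj2 (rename s.renS (.pair l1 l2)) | m + 1 => .var (s.renT m))
        (fun n => by cases n <;> rfl)]
    refine Conv.pair
      (Conv.trans (splice_head_conv s hr1 ?_) (by rw [splice_def] at hc1 ⊢; exact hc1))
      (Conv.trans (splice_head_conv s hr2 ?_) (by rw [splice_def] at hc2 ⊢; exact hc2))
    · exact Conv.beta_proj1 (hl1.rename' s.isRenS) (hl2.rename' s.isRenS)
    · exact Conv.beta_proj2 (hl1.rename' s.isRenS) (hl2.rename' s.isRenS)
  · intro p b hb
    simp only [voc, Set.mem_union] at hb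
    rcases hb with hb | hb
    · rcases hv1 p hb with ⟨h1, h2⟩
      refine ⟨h1, ?_⟩
      rcases h2 with h | h
      · exact Or.inl h
      · exact Or.inr (by simp only [voc, Set.mem_union]; exact Or.inl h)
    · rcases hv2 p hb with ⟨h1, h2⟩
      refine ⟨h1, ?_⟩
      rcases h2 with h | h
      · exact Or.inl h
      · exact Or.inr (by simp only [voc, Set.mem_union]; exact Or.inr h)

theorem cdata_lam {Γ Γs Γt : List (Ty B)} (s : Splits Γ Γs Γt)
    {t : Tm C} {A A' : Ty B}
    (ht : CData tyof (s.right A) t A') :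
    CData tyof s (.lam t) (.arr A A') := by
  obtain ⟨M, l, r, hl, hr, hc, hv⟩ := ht
  refine ⟨M, l,
    .lam (rename (fun n => match n with | 0 => 1 | 1 => 0 | m + 2 => m + 2) r),
    hl, ?_, ?_, ?_⟩
  · refine HasType.lam (hr.rename' ?_)
    intro n X hn
    match n with
    | 0 => simp only [List.getElem?_cons_zero] at hn ⊢; simpa using hn
    | 1 => simpa using hn
    | (m+2) => simpa using hn
  · rw [splice_def]
    simp only [subst]
    rw [subst_rename' r (μ := sSub (s.right A) l) (fun n => by
      match n with
      | 0 =>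
          show rename Nat.succ (rename s.renS l) = rename (s.right A).renS l
          exact rename_rename' l (fun k => rfl)
      | 1 => rfl
      | (m+2) => rfl)]
    exact Conv.lam (by rw [splice_def] at hc; exact hc)
  · intro p b hb
    rcases hv p hb with ⟨h1, h2⟩
    refine ⟨h1, ?_⟩
    rw [vocCtx_cons] at h2
    simp only [voc, Set.mem_union] at h2 ⊢
    tauto

theorem cdata_inl {Γ Γs Γt : List (Ty B)} (s : Splits Γ Γs Γt)
    {a : Tm C} {A A' : Ty B}
    (ht : CData tyof s a A) :
    CData tyof s (.inl a) (.sum A A') := by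
  obtain ⟨M, l, r, hl, hr, hc, hv⟩ := ht
  refine ⟨M, l, .inl r, hl, HasType.inl hr, ?_, ?_⟩
  · rw [splice_def]
    simp only [subst]
    exact Conv.inl (by rw [splice_def] at hc; exact hc)
  · intro p b hb
    rcases hv p hb with ⟨h1, h2⟩
    refine ⟨h1, ?_⟩
    simp only [voc, Set.mem_union] at h2 ⊢
    tauto

theorem cdata_inr {Γ Γs Γt : List (Ty B)} (s : Splits Γ Γs Γt)
    {a : Tm C} {A A' : Ty B}
    (ht : CData tyof s a A') :
    CData tyof s (.inr a) (.sum A A') := by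
  obtain ⟨M, l, r, hl, hr, hc, hv⟩ := ht
  refine ⟨M, l, .inr r, hl, HasType.inr hr, ?_, ?_⟩
  · rw [splice_def]
    simp only [subst]
    exact Conv.inr (by rw [splice_def] at hc; exact hc)
  · intro p b hb
    rcases hv p hb with ⟨h1, h2⟩
    refine ⟨h1, ?_⟩
    simp only [voc, Set.mem_union] at h2 ⊢
    tauto
/-! ### The main cases: from inference data to checking data -/

theorem idata_to_cdata {Γ Γs Γt : List (Ty B)} {s : Splits Γ Γs Γt}
    {t : Tm C} {T : Ty B}
    (h : IData tyof s.flip t T ∨ IData tyof s t T) :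
    CData tyof s t T := by
  rcases h with ⟨hT, M, l, r, hl, hr, hc, hv⟩ | ⟨hT, M, l, r, hl, hr, hc, hv⟩
  · -- the interpolant points the wrong way: use `M → T`
    rw [splice_flip] at hc
    refine ⟨.arr M T, .lam r, .app (.var 0) (rename Nat.succ l),
      HasType.lam hr, ?_, ?_, ?_⟩
    · exact HasType.app (A := M) (HasType.var (by simp))
        (hl.rename' (IsRen.succ Γt (.arr M T)))
    · rw [splice_def]
      simp only [subst]
      rw [subst_rename' (σ := sSub s (.lam r)) (ρ := Nat.succ) l
          (μ := fun n => .var (s.renT n)) (fun n => rfl),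
        ← rename_eq_subst' (ρ := s.renT) l (fun n => rfl)]
      refine Conv.trans (Conv.beta_app (hr.rename' (s.isRenS.lift M))
        (hl.rename' s.isRenT)) ?_
      rw [subst_rename' (σ := sub0 (rename s.renT l)) (ρ := liftRen s.renS) r
          (μ := fun n => match n with
        | 0 => rename s.renT l | m + 1 => .var (s.renS m)) (fun n => by cases n <;> rfl)]
      exact hc
    · intro p b hb
      simp only [voc, Set.mem_union] at hb
      rcases hb with hb | hb
      · rcases hv (!p) (by simpa using hb) with ⟨h1, h2⟩
        exact ⟨by simpa using h2, Or.inl h1⟩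
      · exact ⟨hT p hb, Or.inr hb⟩
  · exact ⟨M, l, r, hl, hr, hc, fun p b hb =>
      ⟨(hv p hb).1, Or.inl (hv p hb).2⟩⟩

theorem cdata_raise {Γ Γs Γt : List (Ty B)} {s : Splits Γ Γs Γt}
    {t : Tm C} {A : Ty B}
    (h : IData tyof s.flip t .empty ∨ IData tyof s t .empty) :
    CData tyof s (.raise t) A := by
  obtain ⟨M, l, r, hl, hr, hc, hv⟩ := idata_to_cdata h
  refine ⟨M, l, .raise r, hl, HasType.raise hr, ?_, ?_⟩
  · rw [splice_def]
    simp only [subst]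
    exact Conv.raise (by rw [splice_def] at hc; exact hc)
  · intro p b hb
    rcases hv p hb with ⟨h1, h2⟩
    refine ⟨h1, ?_⟩
    simp only [voc, Set.mem_union] at h2 ⊢
    tauto

/-! ### The main cases: inference -/

theorem idata_var {Γ Γs Γt : List (Ty B)} (s : Splits Γ Γs Γt)
    {n : Nat} {A : Ty B} (h : Γ[n]? = some A) :
    IData tyof s.flip (.var n : Tm C) A ∨ IData tyof s (.var n : Tm C) A := by
  have hmem : ∀ {Δ : List (Ty B)} {m : Nat}, Δ[m]? = some A →
      ∀ p, voc p A ⊆ vocCtx p Δ := by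
    intro Δ m hm p b hb
    rw [List.getElem?_eq_some_iff] at hm
    obtain ⟨hlt, he⟩ := hm
    exact ⟨A, he ▸ List.getElem_mem hlt, hb⟩
  rcases s.var_cases h with ⟨m, hm, hren⟩ | ⟨m, hm, hren⟩
  · refine Or.inl ⟨hmem hm, .unit, .star, .var (m + 1), HasType.star,
      HasType.var (by simpa using hm), ?_, ?_⟩
    · rw [splice_def]
      show Conv tyof Γ (sSub s.flip (.star : Tm C) (m + 1)) (.var n) A
      show Conv tyof Γ (.var (s.flip.renT m)) (.var n) A
      rw [s.flip_renT m, hren]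
      exact Conv.refl (HasType.var h)
    · intro p b hb; simp [voc] at hb
  · refine Or.inr ⟨hmem hm, .unit, .star, .var (m + 1), HasType.star,
      HasType.var (by simpa using hm), ?_, ?_⟩
    · rw [splice_def]
      show Conv tyof Γ (.var (s.renT m)) (.var n) A
      rw [hren]
      exact Conv.refl (HasType.var h)
    · intro p b hb; simp [voc] at hb

theorem idata_proj1 {Γ Γs Γt : List (Ty B)} {s : Splits Γ Γs Γt}
    {t : Tm C} {A A' : Ty B}
    (h : IData tyof s t (.prod A A')) : IData tyof s (.proj1 t) A := by
  obtain ⟨hT, M, l, r, hl, hr, hc, hv⟩ := h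
  refine ⟨?_, M, l, .proj1 r, hl, HasType.proj1 hr, ?_, hv⟩
  · intro p b hb
    exact hT p (by simp only [voc, Set.mem_union]; exact Or.inl hb)
  · rw [splice_def]
    simp only [subst]
    exact Conv.proj1 (by rw [splice_def] at hc; exact hc)

theorem idata_proj2 {Γ Γs Γt : List (Ty B)} {s : Splits Γ Γs Γt}
    {t : Tm C} {A A' : Ty B}
    (h : IData tyof s t (.prod A A')) : IData tyof s (.proj2 t) A' := by
  obtain ⟨hT, M, l, r, hl, hr, hc, hv⟩ := h
  refine ⟨?_, M, l, .proj2 r, hl, HasType.proj2 hr, ?_, hv⟩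
  · intro p b hb
    exact hT p (by simp only [voc, Set.mem_union]; exact Or.inr hb)
  · rw [splice_def]
    simp only [subst]
    exact Conv.proj2 (by rw [splice_def] at hc; exact hc)

theorem idata_app {Γ Γs Γt : List (Ty B)} {s : Splits Γ Γs Γt}
    {t u : Tm C} {A A' : Ty B}
    (ht : IData tyof s t (.arr A A')) (hu : CData tyof s u A) :
    IData tyof s (.app t u) A' := by
  obtain ⟨hT, Mt, lt, rt, hlt, hrt, hct, hvt⟩ := ht
  obtain ⟨Mu, lu, ru, hlu, hru, hcu, hvu⟩ := hu
  refine ⟨?_, .prod Mt Mu, .pair lt lu,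
    .app (subst (fun n => match n with
        | 0 => .proj1 (.var 0) | m + 1 => .var (m + 1)) rt)
      (subst (fun n => match n with
        | 0 => .proj2 (.var 0) | m + 1 => .var (m + 1)) ru), ?_, ?_, ?_, ?_⟩
  · intro p b hb
    exact hT p (by simp only [voc, Set.mem_union]; exact Or.inr hb)
  · exact HasType.pair hlt hlu
  · refine HasType.app (hrt.subst' ?_) (hru.subst' ?_)
    · intro n X hn
      match n with
      | 0 =>
          simp only [List.getElem?_cons_zero, Option.some.injEq] at hn
          exact hn ▸ HasType.proj1 (A' := Mu) (HasType.var (by simp))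
      | (m+1) =>
          simp only [List.getElem?_cons_succ] at hn
          exact HasType.var (by simpa using hn)
    · intro n X hn
      match n with
      | 0 =>
          simp only [List.getElem?_cons_zero, Option.some.injEq] at hn
          exact hn ▸ HasType.proj2 (A := Mt) (HasType.var (by simp))
      | (m+1) =>
          simp only [List.getElem?_cons_succ] at hn
          exact HasType.var (by simpa using hn)
  · rw [splice_def]
    simp only [subst]
    rw [subst_subst' rt (μ := fun n => match n with
        | 0 => .proj1 (rename s.renS (.pair lt lu)) | m + 1 => .var (s.renT m))
        (fun n => by cases n <;> rfl),
      subst_subst' ru (μ := fun n => match n with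
        | 0 => .proj2 (rename s.renS (.pair lt lu)) | m + 1 => .var (s.renT m))
        (fun n => by cases n <;> rfl)]
    refine Conv.app
      (Conv.trans (splice_head_conv s hrt ?_) (by rw [splice_def] at hct ⊢; exact hct))
      (Conv.trans (splice_head_conv s hru ?_) (by rw [splice_def] at hcu ⊢; exact hcu))
    · exact Conv.beta_proj1 (hlt.rename' s.isRenS) (hlu.rename' s.isRenS)
    · exact Conv.beta_proj2 (hlt.rename' s.isRenS) (hlu.rename' s.isRenS)
  · intro p b hb
    simp only [voc, Set.mem_union] at hb
    rcases hb with hb | hb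
    · exact hvt p hb
    · rcases hvu p hb with ⟨h1, h2⟩
      refine ⟨h1, ?_⟩
      rcases h2 with h | h
      · exact h
      · exact hT (!p) (by simp only [voc, Set.mem_union, Bool.not_not]; exact Or.inl h)
/-! ### The case rule, scrutinee pointing to `Γt` -/

theorem cdata_case_b {Γ Γs Γt : List (Ty B)} {s : Splits Γ Γs Γt}
    {s0 bl br : Tm C} {A A' T : Ty B}
    (h0 : IData tyof s s0 (.sum A A'))
    (h1 : CData tyof (s.right A) bl T)
    (h2 : CData tyof (s.right A') br T) :
    CData tyof s (.case s0 bl br) T := by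
  obtain ⟨hT0, M0, l0, r0, hl0, hr0, hc0, hv0⟩ := h0
  obtain ⟨M1, l1, r1, hl1, hr1, hc1, hv1⟩ := h1
  obtain ⟨M2, l2, r2, hl2, hr2, hc2, hv2⟩ := h2
  refine ⟨.prod M0 (.prod M1 M2), .pair l0 (.pair l1 l2),
    .case (subst (fun n => match n with
        | 0 => .proj1 (.var 0) | m + 1 => .var (m + 1)) r0)
      (subst (fun n => match n with
        | 0 => .proj1 (.proj2 (.var 1)) | 1 => .var 0 | m + 2 => .var (m + 2)) r1)
      (subst (fun n => match n with
        | 0 => .proj2 (.proj2 (.var 1)) | 1 => .var 0 | m + 2 => .var (m + 2)) r2),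
    HasType.pair hl0 (HasType.pair hl1 hl2), ?_, ?_, ?_⟩
  · refine HasType.case (hr0.subst' ?_) (hr1.subst' ?_) (hr2.subst' ?_)
    · intro n X hn
      match n with
      | 0 =>
          simp only [List.getElem?_cons_zero, Option.some.injEq] at hn
          exact hn ▸ HasType.proj1 (A' := .prod M1 M2) (HasType.var (by simp))
      | (m+1) =>
          simp only [List.getElem?_cons_succ] at hn
          exact HasType.var (by simpa using hn)
    · intro n X hn
      match n with
      | 0 =>
          simp only [List.getElem?_cons_zero, Option.some.injEq] at hn
          refine hn ▸ HasType.proj1 (A' := M2)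
            (HasType.proj2 (A := M0) (HasType.var (n := 1) (by simp)))
      | 1 =>
          simp only [List.getElem?_cons_succ, List.getElem?_cons_zero,
            Option.some.injEq] at hn
          exact HasType.var (by simp [hn])
      | (m+2) =>
          simp only [List.getElem?_cons_succ] at hn
          exact HasType.var (by simpa using hn)
    · intro n X hn
      match n with
      | 0 =>
          simp only [List.getElem?_cons_zero, Option.some.injEq] at hn
          refine hn ▸ HasType.proj2 (A := M1)
            (HasType.proj2 (A := M0) (HasType.var (n := 1) (by simp)))
      | 1 =>
          simp only [List.getElem?_cons_succ, List.getElem?_cons_zero,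
            Option.some.injEq] at hn
          exact HasType.var (by simp [hn])
      | (m+2) =>
          simp only [List.getElem?_cons_succ] at hn
          exact HasType.var (by simpa using hn)
  · rw [splice_def]
    simp only [subst]
    rw [subst_subst' r0 (μ := fun n => match n with
        | 0 => .proj1 (rename s.renS (.pair l0 (.pair l1 l2)))
        | m + 1 => .var (s.renT m))
        (fun n => by cases n <;> rfl),
      subst_subst' r1 (μ := fun n => match n with
        | 0 => .proj1 (.proj2 (rename Nat.succ (rename s.renS (.pair l0 (.pair l1 l2)))))
        | m + 1 => .var ((s.right A).renT m))
        (fun n => by match n with | 0 => rfl | 1 => rfl | (m+2) => rfl),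
      subst_subst' r2 (μ := fun n => match n with
        | 0 => .proj2 (.proj2 (rename Nat.succ (rename s.renS (.pair l0 (.pair l1 l2)))))
        | m + 1 => .var ((s.right A').renT m))
        (fun n => by match n with | 0 => rfl | 1 => rfl | (m+2) => rfl)]
    have hQ : ∀ {X : Ty B} {y : Tm C}, HasType tyof Γs y X → ∀ (Y : Ty B),
        HasType tyof (Y :: Γ) (rename Nat.succ (rename s.renS y)) X :=
      fun hy Y => (hy.rename' s.isRenS).rename' (IsRen.succ Γ Y)
    have eq1 : rename Nat.succ (rename s.renS l1) = rename (s.right A).renS l1 :=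
      rename_rename' l1 (fun k => rfl)
    have eq2 : rename Nat.succ (rename s.renS l2) = rename (s.right A').renS l2 :=
      rename_rename' l2 (fun k => rfl)
    refine Conv.case
      (Conv.trans (splice_head_conv s hr0
        (Conv.beta_proj1 (hl0.rename' s.isRenS)
          ((HasType.pair hl1 hl2).rename' s.isRenS))) hc0)
      (Conv.trans (splice_head_conv (s.right A) hr1 ?_) hc1)
      (Conv.trans (splice_head_conv (s.right A') hr2 ?_) hc2)
    · rw [← eq1]
      exact Conv.trans
        (Conv.proj1 (Conv.beta_proj2 (hQ hl0 A) (hQ (HasType.pair hl1 hl2) A)))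
        (Conv.beta_proj1 (hQ hl1 A) (hQ hl2 A))
    · rw [← eq2]
      exact Conv.trans
        (Conv.proj2 (Conv.beta_proj2 (hQ hl0 A') (hQ (HasType.pair hl1 hl2) A')))
        (Conv.beta_proj2 (hQ hl1 A') (hQ hl2 A'))
  · intro p b hb
    simp only [voc, Set.mem_union] at hb
    rcases hb with hb | hb | hb
    · rcases hv0 p hb with ⟨hs', ht'⟩
      exact ⟨hs', Or.inl ht'⟩
    · rcases hv1 p hb with ⟨hs', hrest⟩
      refine ⟨hs', ?_⟩
      rw [vocCtx_cons] at hrest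
      rcases hrest with (hA | hGt) | hT
      · exact Or.inl (hT0 (!p) (by simp only [voc, Set.mem_union]; exact Or.inl hA))
      · exact Or.inl hGt
      · exact Or.inr hT
    · rcases hv2 p hb with ⟨hs', hrest⟩
      refine ⟨hs', ?_⟩
      rw [vocCtx_cons] at hrest
      rcases hrest with (hA | hGt) | hT
      · exact Or.inl (hT0 (!p) (by simp only [voc, Set.mem_union]; exact Or.inr hA))
      · exact Or.inl hGt
      · exact Or.inr hT
/-! ### The case rule, scrutinee pointing to `Γs` -/

theorem cdata_case_a {Γ Γs Γt : List (Ty B)} {s : Splits Γ Γs Γt}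
    {s0 bl br : Tm C} {A A' T : Ty B}
    (h0 : IData tyof s.flip s0 (.sum A A'))
    (h1 : CData tyof (s.left A) bl T)
    (h2 : CData tyof (s.left A') br T) :
    CData tyof s (.case s0 bl br) T := by
  obtain ⟨hT0, M0, l0, r0, hl0, hr0, hc0, hv0⟩ := h0
  rw [splice_flip] at hc0
  obtain ⟨M1, l1, r1, hl1, hr1, hc1, hv1⟩ := h1
  obtain ⟨M2, l2, r2, hl2, hr2, hc2, hv2⟩ := h2
  -- the interpolant type and terms
  set MM : Ty B := .arr M0 (.sum M1 M2) with hMM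
  set L : Tm C := .lam (.case r0 (.inl (rename (liftRen Nat.succ) l1))
    (.inr (rename (liftRen Nat.succ) l2))) with hL
  refine ⟨MM, L,
    .case (.app (.var 0) (rename Nat.succ l0))
      (rename (liftRen Nat.succ) r1) (rename (liftRen Nat.succ) r2),
    ?_, ?_, ?_, ?_⟩
  · exact HasType.lam (HasType.case hr0
      (HasType.inl (hl1.rename' ((IsRen.succ Γs M0).lift A)))
      (HasType.inr (hl2.rename' ((IsRen.succ Γs M0).lift A'))))
  · refine HasType.case (A := M1) (A' := M2)
      (HasType.app (A := M0) (A' := .sum M1 M2)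
        (HasType.var (n := 0) (by simp [hMM]))
        (hl0.rename' (IsRen.succ Γt MM))) ?_ ?_
    · exact hr1.rename' ((IsRen.succ Γt MM).lift M1)
    · exact hr2.rename' ((IsRen.succ Γt MM).lift M2)
  · -- the conversion
    rw [splice_def]
    simp only [subst]
    rw [subst_rename' (σ := sSub s L) (ρ := Nat.succ) l0
        (μ := fun n => .var (s.renT n)) (fun n => rfl),
      ← rename_eq_subst' (ρ := s.renT) l0 (fun n => rfl),
      subst_rename' (σ := liftSub (sSub s L)) (ρ := liftRen Nat.succ) r1
        (μ := fun n => match n with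
          | 0 => .var 0 | m + 1 => .var (s.renT m + 1))
        (fun n => by cases n <;> rfl),
      subst_rename' (σ := liftSub (sSub s L)) (ρ := liftRen Nat.succ) r2
        (μ := fun n => match n with
          | 0 => .var 0 | m + 1 => .var (s.renT m + 1))
        (fun n => by cases n <;> rfl)]
    -- names for the pieces
    set K0 : Tm C := rename s.renT l0 with hK0def
    set N1 : Tm C := subst (fun n => match n with
      | 0 => .var 0 | m + 1 => .var (s.renT m + 1)) r1 with hN1def
    set N2 : Tm C := subst (fun n => match n with
      | 0 => .var 0 | m + 1 => .var (s.renT m + 1)) r2 with hN2def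
    set A1 : Tm C := rename (s.left A).renS l1 with hA1def
    set A2 : Tm C := rename (s.left A').renS l2 with hA2def
    have hK0 : HasType tyof Γ K0 M0 := hl0.rename' s.isRenT
    have hN1 : HasType tyof (M1 :: Γ) N1 T := by
      refine hr1.subst' ?_
      intro n X hn
      match n with
      | 0 =>
          simp only [List.getElem?_cons_zero, Option.some.injEq] at hn
          exact HasType.var (by simp [hn])
      | (m+1) =>
          simp only [List.getElem?_cons_succ] at hn
          exact HasType.var (by simpa using s.isRenT m X hn)
    have hN2 : HasType tyof (M2 :: Γ) N2 T := by
      refine hr2.subst' ?_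
      intro n X hn
      match n with
      | 0 =>
          simp only [List.getElem?_cons_zero, Option.some.injEq] at hn
          exact HasType.var (by simp [hn])
      | (m+1) =>
          simp only [List.getElem?_cons_succ] at hn
          exact HasType.var (by simpa using s.isRenT m X hn)
    have hbody : HasType tyof (M0 :: Γ)
        (rename (liftRen s.renS) (.case r0 (.inl (rename (liftRen Nat.succ) l1))
          (.inr (rename (liftRen Nat.succ) l2)))) (.sum M1 M2) :=
      (HasType.case hr0
        (HasType.inl (hl1.rename' ((IsRen.succ Γs M0).lift A)))
        (HasType.inr (hl2.rename' ((IsRen.succ Γs M0).lift A')))).rename'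
        (s.isRenS.lift M0)
    have happ : Conv tyof Γ (.app (sSub s L 0) K0)
        (subst (sub0 K0) (rename (liftRen s.renS)
          (.case r0 (.inl (rename (liftRen Nat.succ) l1))
            (.inr (rename (liftRen Nat.succ) l2))))) (.sum M1 M2) :=
      Conv.beta_app hbody hK0
    have hWeq : subst (sub0 K0) (rename (liftRen s.renS)
          (.case r0 (.inl (rename (liftRen Nat.succ) l1))
            (.inr (rename (liftRen Nat.succ) l2))))
        = .case (splice s.renT s.renS l0 r0) (.inl A1) (.inr A2) := by
      simp only [rename, subst]
      rw [subst_rename' (σ := sub0 K0) (ρ := liftRen s.renS) r0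
          (μ := fun n => match n with
            | 0 => rename s.renT l0 | m + 1 => .var (s.renS m))
          (fun n => by cases n <;> rfl)]
      rw [rename_rename' (ρ := liftRen (liftRen s.renS)) (ρ' := liftRen Nat.succ) l1
          (ρ'' := fun n => match n with | 0 => 0 | m + 1 => s.renS m + 2)
          (fun n => by cases n <;> rfl),
        subst_rename' (σ := liftSub (sub0 K0))
          (ρ := fun n => match n with | 0 => 0 | m + 1 => s.renS m + 2) l1
          (μ := fun n => .var ((s.left A).renS n))
          (fun n => by cases n <;> rfl),
        ← rename_eq_subst' (ρ := (s.left A).renS) l1 (fun n => rfl)]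
      rw [rename_rename' (ρ := liftRen (liftRen s.renS)) (ρ' := liftRen Nat.succ) l2
          (ρ'' := fun n => match n with | 0 => 0 | m + 1 => s.renS m + 2)
          (fun n => by cases n <;> rfl),
        subst_rename' (σ := liftSub (sub0 K0))
          (ρ := fun n => match n with | 0 => 0 | m + 1 => s.renS m + 2) l2
          (μ := fun n => .var ((s.left A').renS n))
          (fun n => by cases n <;> rfl),
        ← rename_eq_subst' (ρ := (s.left A').renS) l2 (fun n => rfl)]
      rfl
    have hSP : HasType tyof Γ (splice s.renT s.renS l0 r0) (.sum A A') := by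
      refine hr0.subst' ?_
      intro n X hn
      match n with
      | 0 =>
          simp only [List.getElem?_cons_zero, Option.some.injEq] at hn
          exact hn ▸ hl0.rename' s.isRenT
      | (m+1) =>
          simp only [List.getElem?_cons_succ] at hn
          exact HasType.var (s.isRenS m X hn)
    have hA1 : HasType tyof (A :: Γ) A1 M1 := hl1.rename' (s.left A).isRenS
    have hA2 : HasType tyof (A' :: Γ) A2 M2 := hl2.rename' (s.left A').isRenS
    -- branch conversions
    have hblconv : Conv tyof (A :: Γ)
        (.case (.inl A1) (rename (liftRen Nat.succ) N1) (rename (liftRen Nat.succ) N2))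
        bl T := by
      have hb := Conv.beta_inl hA1
        (hN1.rename' ((IsRen.succ Γ A).lift M1))
        (hN2.rename' ((IsRen.succ Γ A).lift M2))
      have he : subst (sub0 A1) (rename (liftRen Nat.succ) N1)
          = splice (s.left A).renS (s.left A).renT l1 r1 := by
        rw [hN1def,
          rename_subst' (ρ := liftRen Nat.succ) (σ := fun n => match n with
            | 0 => .var 0 | m + 1 => .var (s.renT m + 1)) r1
            (μ := fun n => match n with
            | 0 => .var 0 | m + 1 => .var (s.renT m + 2))
            (fun n => by cases n <;> rfl),
          subst_subst' (σ := sub0 A1) r1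
            (μ := fun n => match n with
            | 0 => A1 | m + 1 => .var (s.renT m + 1))
            (fun n => by cases n <;> rfl)]
        rfl
      rw [he] at hb
      exact Conv.trans hb hc1
    have hbrconv : Conv tyof (A' :: Γ)
        (.case (.inr A2) (rename (liftRen Nat.succ) N1) (rename (liftRen Nat.succ) N2))
        br T := by
      have hb := Conv.beta_inr hA2
        (hN1.rename' ((IsRen.succ Γ A').lift M1))
        (hN2.rename' ((IsRen.succ Γ A').lift M2))
      have he : subst (sub0 A2) (rename (liftRen Nat.succ) N2)
          = splice (s.left A').renS (s.left A').renT l2 r2 := by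
        rw [hN2def,
          rename_subst' (ρ := liftRen Nat.succ) (σ := fun n => match n with
            | 0 => .var 0 | m + 1 => .var (s.renT m + 1)) r2
            (μ := fun n => match n with
            | 0 => .var 0 | m + 1 => .var (s.renT m + 2))
            (fun n => by cases n <;> rfl),
          subst_subst' (σ := sub0 A2) r2
            (μ := fun n => match n with
            | 0 => A2 | m + 1 => .var (s.renT m + 1))
            (fun n => by cases n <;> rfl)]
        rfl
      rw [he] at hb
      exact Conv.trans hb hc2
    -- assemble
    refine Conv.trans (Conv.case happ (Conv.refl hN1) (Conv.refl hN2)) ?_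
    rw [hWeq]
    refine Conv.trans (conv_case_case hSP (HasType.inl hA1) (HasType.inr hA2) hN1 hN2) ?_
    exact Conv.case hc0 hblconv hbrconv
  · -- vocabulary
    intro p b hb
    simp only [hMM, voc, Set.mem_union] at hb
    rcases hb with hb | hb | hb
    · rcases hv0 (!p) hb with ⟨ht', hs'⟩
      rw [Bool.not_not] at hs'
      exact ⟨hs', Or.inl ht'⟩
    · rcases hv1 p hb with ⟨hs', hrest⟩
      rw [vocCtx_cons] at hs'
      rcases hs' with hA | hGs
      · exact ⟨hT0 p (by simp only [voc, Set.mem_union]; exact Or.inl hA), hrest⟩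
      · exact ⟨hGs, hrest⟩
    · rcases hv2 p hb with ⟨hs', hrest⟩
      rw [vocCtx_cons] at hs'
      rcases hs' with hA | hGs
      · exact ⟨hT0 p (by simp only [voc, Set.mem_union]; exact Or.inr hA), hrest⟩
      · exact ⟨hGs, hrest⟩
/-! ### Assembling the induction -/

theorem interp_check {B : Type} {Γ : List (Ty B)} {t : Tm Empty} {T : Ty B}
    (h : Check noCst Γ t T) :
    ∀ {Γs Γt : List (Ty B)} (s : Splits Γ Γs Γt), CData noCst s t T := by
  refine Check.rec (tyof := noCst (B := B))
    (motive_1 := fun Γ t T _ => ∀ {Γs Γt : List (Ty B)} (s : Splits Γ Γs Γt),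
      CData noCst s t T)
    (motive_2 := fun Γ t T _ => ∀ {Γs Γt : List (Ty B)} (s : Splits Γ Γs Γt),
      IData noCst s.flip t T ∨ IData noCst s t T)
    ?_ ?_ ?_ ?_ ?_ ?_ ?_ ?_ ?_ ?_ ?_ ?_ ?_ h
  · intro Γ Γs Γt s
    exact cdata_star s
  · intro Γ t A u A' ha hu iht ihu Γs Γt s
    exact cdata_pair s (iht s) (ihu s)
  · intro A Γ t A' ha iht Γs Γt s
    exact cdata_lam s (iht (s.right A))
  · intro Γ a A A' ha ih Γs Γt s
    exact cdata_inl s (ih s)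
  · intro Γ b A' A ha ih Γs Γt s
    exact cdata_inr s (ih s)
  · intro Γ t A A' ha e ih Γs Γt s
    exact e ▸ idata_to_cdata (ih s)
  · intro Γ t A ha ih Γs Γt s
    exact cdata_raise (ih s)
  · intro Γ s0 A A' bl T br h0' h1' h2' ih0 ih1 ih2 Γs Γt s
    rcases ih0 s with h0 | h0
    · exact cdata_case_a h0 (ih1 (s.left _)) (ih2 (s.left _))
    · exact cdata_case_b h0 (ih1 (s.right _)) (ih2 (s.right _))
  · intro Γ c
    exact c.elim
  · intro Γ n A hn Γs Γt s
    exact idata_var s hn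
  · intro Γ q A A' ha ih Γs Γt s
    exact (ih s).imp idata_proj1 idata_proj1
  · intro Γ q A A' ha ih Γs Γt s
    exact (ih s).imp idata_proj2 idata_proj2
  · intro Γ t A A' u ha hu iht ihu Γs Γt s
    exact (iht s).imp (fun h => idata_app h (ihu s.flip)) (fun h => idata_app h (ihu s))

theorem interp_infer {B : Type} {Γ : List (Ty B)} {t : Tm Empty} {T : Ty B}
    (h : Infer noCst Γ t T) :
    ∀ {Γs Γt : List (Ty B)} (s : Splits Γ Γs Γt),
      IData noCst s.flip t T ∨ IData noCst s t T := by
  refine Infer.rec (tyof := noCst (B := B))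
    (motive_1 := fun Γ t T _ => ∀ {Γs Γt : List (Ty B)} (s : Splits Γ Γs Γt),
      CData noCst s t T)
    (motive_2 := fun Γ t T _ => ∀ {Γs Γt : List (Ty B)} (s : Splits Γ Γs Γt),
      IData noCst s.flip t T ∨ IData noCst s t T)
    ?_ ?_ ?_ ?_ ?_ ?_ ?_ ?_ ?_ ?_ ?_ ?_ ?_ h
  · intro Γ Γs Γt s
    exact cdata_star s
  · intro Γ t A u A' ha hu iht ihu Γs Γt s
    exact cdata_pair s (iht s) (ihu s)
  · intro A Γ t A' ha iht Γs Γt s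
    exact cdata_lam s (iht (s.right A))
  · intro Γ a A A' ha ih Γs Γt s
    exact cdata_inl s (ih s)
  · intro Γ b A' A ha ih Γs Γt s
    exact cdata_inr s (ih s)
  · intro Γ t A A' ha e ih Γs Γt s
    exact e ▸ idata_to_cdata (ih s)
  · intro Γ t A ha ih Γs Γt s
    exact cdata_raise (ih s)
  · intro Γ s0 A A' bl T br h0' h1' h2' ih0 ih1 ih2 Γs Γt s
    rcases ih0 s with h0 | h0
    · exact cdata_case_a h0 (ih1 (s.left _)) (ih2 (s.left _))
    · exact cdata_case_b h0 (ih1 (s.right _)) (ih2 (s.right _))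
  · intro Γ c
    exact c.elim
  · intro Γ n A hn Γs Γt s
    exact idata_var s hn
  · intro Γ q A A' ha ih Γs Γt s
    exact (ih s).imp idata_proj1 idata_proj1
  · intro Γ q A A' ha ih Γs Γt s
    exact (ih s).imp idata_proj2 idata_proj2
  · intro Γ t A A' u ha hu iht ihu Γs Γt s
    exact (iht s).imp (fun h => idata_app h (ihu s.flip)) (fun h => idata_app h (ihu s))
/-- **Interpolation, inductive statement** (constant-free language):
the statement for normal forms, together with the two-case statement for
neutrals, over a partitioned context `Γ = Γs ⋈ Γt`. -/
theorem interpolation_inductive {B : Type} {Γ Γs Γt : List (Ty B)}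
    (s : Splits Γ Γs Γt) :
    (∀ (t : Tm Empty) (T : Ty B), Check noCst Γ t T →
      ∃ (M : Ty B) (l r : Tm Empty),
        HasType noCst Γs l M ∧ HasType noCst (M :: Γt) r T ∧
        Conv noCst Γ (splice s.renS s.renT l r) t T ∧
        ∀ p : Bool, voc p M ⊆ vocCtx p Γs ∩ (vocCtx (!p) Γt ∪ voc p T)) ∧
    (∀ (t : Tm Empty) (T : Ty B), Infer noCst Γ t T →
      ((∀ p : Bool, voc p T ⊆ vocCtx p Γs) ∧
        ∃ (M : Ty B) (l r : Tm Empty),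
          HasType noCst Γt l M ∧ HasType noCst (M :: Γs) r T ∧
          Conv noCst Γ (splice s.renT s.renS l r) t T ∧
          ∀ p : Bool, voc p M ⊆ vocCtx (!p) Γs ∩ vocCtx p Γt) ∨
      ((∀ p : Bool, voc p T ⊆ vocCtx p Γt) ∧
        ∃ (M : Ty B) (l r : Tm Empty),
          HasType noCst Γs l M ∧ HasType noCst (M :: Γt) r T ∧
          Conv noCst Γ (splice s.renS s.renT l r) t T ∧
          ∀ p : Bool, voc p M ⊆ vocCtx p Γs ∩ vocCtx (!p) Γt)) := by
  constructor
  · intro t T h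
    exact interp_check h s
  · intro t T h
    rcases interp_infer h s with ⟨hT, M, l, r, h1, h2, h3, h4⟩ |
      ⟨hT, M, l, r, h1, h2, h3, h4⟩
    · refine Or.inl ⟨hT, M, l, r, h1, h2, ?_, ?_⟩
      · rwa [splice_flip] at h3
      · intro p b hb
        rcases h4 p hb with ⟨x, y⟩
        exact ⟨y, x⟩
    · exact Or.inr ⟨hT, M, l, r, h1, h2, h3, h4⟩


end STLCp
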